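/- arXiv:2002.01357 — 6 statements merged into one kernel-verified Lean document; each statement's English description precedes it below -/
import Mathlib

section
/- Let β : ℝ → ℝ be a positive, T-periodic, continuously differentiable function (T > 0) satisfying the logistic-type equation β'(t)/2 = β(t)(ρ(t) + δ − β(t)) for all t, where ρ : ℝ → ℝ is continuous and T-periodic and δ ≥ 0. Then the average of β over a period equals the average of ρ plus δ: (1/T)∫₀ᵀ β(s) ds = (1/T)∫₀ᵀ ρ(s) ds + δ. -/
theorem stmt0 (T : ℝ) (hT : 0 < T) (ρ : ℝ → ℝ) (hρc : Continuous ρ)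
    (hρp : ∀ t, ρ (t + T) = ρ t) (δ : ℝ) (hδ : 0 ≤ δ)
    (β : ℝ → ℝ) (hβ : ContDiff ℝ 1 β) (hβpos : ∀ t, 0 < β t)
    (hβp : ∀ t, β (t + T) = β t)
    (hode : ∀ t, deriv β t / 2 = β t * (ρ t + δ - β t)) :
    (1 / T) * ∫ s in (0:ℝ)..T, β s = (1 / T) * (∫ s in (0:ℝ)..T, ρ s) + δ := by
  have hβc : Continuous β := hβ.continuous
  have hβne : ∀ t, β t ≠ 0 := fun t => (hβpos t).ne'
  set f : ℝ → ℝ := fun t => Real.log (β t) / 2 with hf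
  have hder : ∀ t, HasDerivAt f (ρ t + δ - β t) t := by
    intro t
    have hβd : HasDerivAt β (deriv β t) t :=
      (hβ.differentiable one_ne_zero t).hasDerivAt
    have h1 : HasDerivAt (fun t => Real.log (β t)) (deriv β t / β t) t :=
      (Real.hasDerivAt_log (hβne t)).comp t hβd |>.congr_deriv (by ring)
    have h2 := h1.div_const 2
    refine h2.congr_deriv (Eq.symm ?_)
    rw [eq_comm, div_div, div_eq_iff (mul_ne_zero (hβne t) two_ne_zero)]
    linear_combination 2 * hode t
  have hcont : Continuous fun t => ρ t + δ - β t := by continuity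
  have hint : ∫ s in (0:ℝ)..T, (ρ s + δ - β s) = f T - f 0 := by
    have hdf : deriv f = fun t => ρ t + δ - β t := funext fun x => (hder x).deriv
    rw [← intervalIntegral.integral_deriv_eq_sub (fun x _ => (hder x).differentiableAt)]
    · rw [hdf]
    · rw [hdf]; exact hcont.intervalIntegrable _ _
  have hfTf0 : f T - f 0 = 0 := by
    have : β T = β 0 := by simpa using hβp 0
    simp [hf, this]
  rw [hfTf0] at hint
  have hsplit : ∫ s in (0:ℝ)..T, (ρ s + δ - β s)
      = (∫ s in (0:ℝ)..T, ρ s) + δ * T - ∫ s in (0:ℝ)..T, β s := by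
    rw [show (fun s => ρ s + δ - β s) = (fun s => (ρ s + δ) - β s) from rfl]
    rw [intervalIntegral.integral_sub (f := fun s => ρ s + δ) ((hρc.add continuous_const).intervalIntegrable _ _)
      (hβc.intervalIntegrable _ _),
      intervalIntegral.integral_add (hρc.intervalIntegrable _ _)
      (continuous_const.intervalIntegrable _ _)]
    simp [mul_comm]
  rw [hsplit] at hint
  have hTne : T ≠ 0 := hT.ne'
  field_simp
  linarith
end

section
/- Fix T > 0, a continuous T-periodic function ρ : ℝ → ℝ with ρ ≥ 0 and ρ not identically zero, constants δ ≥ 0, β a positive T-periodic C¹ solution of β'/2 = β(ρ + δ − β), α a positive T-periodic C¹ solution of α' + βα = μα with μ = (1/T)∫₀ᵀ β. Then the function ψ(y,t) := α(t)·exp(−β(t)y²/2) satisfies the PDE ∂ₜψ − ∂_{yy}ψ − y(ρ(t)+δ)∂_yψ = μ ψ for all (y,t) ∈ ℝ × ℝ. -/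
theorem stmt2 (T : ℝ) (hT : 0 < T) (ρ : ℝ → ℝ) (hρc : Continuous ρ)
    (hρp : ∀ t, ρ (t + T) = ρ t) (hρnn : ∀ t, 0 ≤ ρ t) (hρne : ∃ t, ρ t ≠ 0)
    (δ : ℝ) (hδ : 0 ≤ δ)
    (β : ℝ → ℝ) (hβ : ContDiff ℝ 1 β) (hβpos : ∀ t, 0 < β t)
    (hβp : ∀ t, β (t + T) = β t)
    (hβode : ∀ t, deriv β t / 2 = β t * (ρ t + δ - β t))
    (μ : ℝ) (hμ : μ = (1 / T) * ∫ s in (0:ℝ)..T, β s)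
    (α : ℝ → ℝ) (hα : ContDiff ℝ 1 α) (hαpos : ∀ t, 0 < α t)
    (hαp : ∀ t, α (t + T) = α t)
    (hαode : ∀ t, deriv α t + β t * α t = μ * α t)
    (ψ : ℝ → ℝ → ℝ) (hψ : ∀ y t, ψ y t = α t * Real.exp (-(β t) * y ^ 2 / 2)) :
    ∀ y t, deriv (fun τ => ψ y τ) t - deriv (deriv (fun z => ψ z t)) y
      - y * (ρ t + δ) * deriv (fun z => ψ z t) y = μ * ψ y t := by
  intro y t
  have hαd : HasDerivAt α (deriv α t) t := ((hα.differentiable one_ne_zero) t).hasDerivAt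
  have hβd : HasDerivAt β (deriv β t) t := ((hβ.differentiable one_ne_zero) t).hasDerivAt
  set E := Real.exp (-(β t) * y ^ 2 / 2) with hE
  -- time derivative
  have h1 : HasDerivAt (fun τ => ψ y τ)
      (deriv α t * E + α t * (E * (-(deriv β t) * y ^ 2 / 2))) t := by
    have hin : HasDerivAt (fun τ => -(β τ) * y ^ 2 / 2) (-(deriv β t) * y ^ 2 / 2) t :=
      (hβd.neg.mul_const (y ^ 2)).div_const 2
    have h := hαd.mul hin.exp
    have heq : (fun τ => ψ y τ) = fun τ => α τ * Real.exp (-(β τ) * y ^ 2 / 2) := by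
      funext τ; exact hψ y τ
    rw [heq]
    exact h
  -- first space derivative, as a function
  have hg : ∀ z : ℝ, HasDerivAt (fun z => ψ z t)
      (α t * (Real.exp (-(β t) * z ^ 2 / 2) * (-(β t) * z))) z := by
    intro z
    have hin : HasDerivAt (fun z : ℝ => -(β t) * z ^ 2 / 2) (-(β t) * z) z := by
      have := ((hasDerivAt_pow 2 z).const_mul (-(β t))).div_const 2
      exact this.congr_deriv (by ring)
    have h := hin.exp.const_mul (α t)
    have heq : (fun z => ψ z t) = fun z => α t * Real.exp (-(β t) * z ^ 2 / 2) := by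
      funext z; exact hψ z t
    rw [heq]
    exact h
  have hDg : deriv (fun z => ψ z t)
      = fun z => α t * (Real.exp (-(β t) * z ^ 2 / 2) * (-(β t) * z)) := by
    funext z; exact (hg z).deriv
  -- second space derivative
  have h2 : HasDerivAt (fun z => α t * (Real.exp (-(β t) * z ^ 2 / 2) * (-(β t) * z)))
      (α t * ((E * (-(β t) * y)) * (-(β t) * y) + E * (-(β t)))) y := by
    have hin : HasDerivAt (fun z : ℝ => -(β t) * z ^ 2 / 2) (-(β t) * y) y := by
      have := ((hasDerivAt_pow 2 y).const_mul (-(β t))).div_const 2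
      exact this.congr_deriv (by ring)
    have hlin : HasDerivAt (fun z : ℝ => -(β t) * z) (-(β t)) y := by
      simpa using (hasDerivAt_id y).const_mul (-(β t))
    exact (hin.exp.mul hlin).const_mul (α t)
  rw [h1.deriv, hDg, h2.deriv, hψ y t]
  have hb := hβode t
  have ha := hαode t
  linear_combination E * ha - α t * y ^ 2 * E * hb
end

section
/- Let T > 0, ρ : ℝ → ℝ continuous, T-periodic, nonnegative, not identically zero, with average ρ̂ = (1/T)∫₀ᵀ ρ > 0. Let δ > 0 be arbitrary. For the equation β'/2 = β(ρ + δ − β), there exists a unique positive T-periodic C¹ solution β_δ, and its average equals ρ̂ + δ. -/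
open intervalIntegral Real

/-- The average of any positive periodic solution is `ρ̂ + δ`. -/
theorem stmt16_avg {T : ℝ} (hT : 0 < T) {ρ : ℝ → ℝ} (hρ : Continuous ρ) {δ : ℝ}
    (β : ℝ → ℝ) (h1 : ContDiff ℝ 1 β) (h2 : ∀ t, 0 < β t)
    (h3 : ∀ t, β (t + T) = β t)
    (h4 : ∀ t, deriv β t = 2 * β t * (ρ t + δ - β t)) :
    (1 / T) * ∫ s in (0:ℝ)..T, β s = (1 / T) * (∫ s in (0:ℝ)..T, ρ s) + δ := by
  have hβc : Continuous β := h1.continuous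
  have hlog : ∀ t, HasDerivAt (fun s => Real.log (β s)) (2 * (ρ t + δ - β t)) t := by
    intro t
    have hd : HasDerivAt β (2 * β t * (ρ t + δ - β t)) t := by
      have := (h1.differentiable one_ne_zero t).hasDerivAt
      rwa [h4 t] at this
    have := (Real.hasDerivAt_log (ne_of_gt (h2 t))).comp t hd
    refine this.congr_deriv ?_
    field_simp [(h2 t).ne']
  have hint : ∫ t in (0:ℝ)..T, 2 * (ρ t + δ - β t) =
      Real.log (β T) - Real.log (β 0) := by
    apply intervalIntegral.integral_eq_sub_of_hasDerivAt (fun t _ => hlog t)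
    exact (by fun_prop : Continuous fun t => 2 * (ρ t + δ - β t)).intervalIntegrable 0 T
  have hper : β T = β 0 := by have := h3 0; simpa using this
  rw [hper, sub_self] at hint
  have hiρ : IntervalIntegrable ρ MeasureTheory.volume 0 T := hρ.intervalIntegrable 0 T
  have hiβ : IntervalIntegrable β MeasureTheory.volume 0 T := hβc.intervalIntegrable 0 T
  have hiρδ : IntervalIntegrable (fun t => ρ t + δ) MeasureTheory.volume 0 T :=
    hiρ.add intervalIntegrable_const
  have hsplit : ∫ t in (0:ℝ)..T, 2 * (ρ t + δ - β t)
      = 2 * ((∫ t in (0:ℝ)..T, ρ t) + T * δ - ∫ t in (0:ℝ)..T, β t) := by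
    rw [intervalIntegral.integral_const_mul, intervalIntegral.integral_sub hiρδ hiβ,
      intervalIntegral.integral_add hiρ intervalIntegrable_const]
    simp [smul_eq_mul]
  rw [hsplit] at hint
  have hβint : ∫ t in (0:ℝ)..T, β t = (∫ t in (0:ℝ)..T, ρ t) + T * δ := by linarith
  rw [hβint]
  field_simp

/-- Existence and uniqueness of the positive periodic solution. -/
theorem stmt16_exun {T : ℝ} (hT : 0 < T) {ρ : ℝ → ℝ} (hρ : Continuous ρ)
    (hρper : ∀ t, ρ (t + T) = ρ t) (hρnn : ∀ t, 0 ≤ ρ t) {δ : ℝ} (hδ : 0 < δ) :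
    ∃! β : ℝ → ℝ, ContDiff ℝ 1 β ∧ (∀ t, 0 < β t) ∧ (∀ t, β (t + T) = β t) ∧
      ∀ t, deriv β t = 2 * β t * (ρ t + δ - β t) := by
  set a : ℝ → ℝ := fun t => ρ t + δ with ha_def
  have ha : Continuous a := by fun_prop
  have haper : Function.Periodic a T := fun t => by simp [ha_def, hρper t]
  have hapos : ∀ t, 0 < a t := fun t => by
    have := hρnn t; simp only [ha_def]; linarith
  set A : ℝ → ℝ := fun t => ∫ s in (0:ℝ)..t, a s with hA_def
  have hAd : ∀ t, HasDerivAt A (a t) t := fun t => (ha.integral_hasStrictDerivAt 0 t).hasDerivAt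
  have hAadd : ∀ t, A (t + T) = A t + A T := by
    intro t
    have h1 : (∫ s in (0:ℝ)..t, a s) + ∫ s in t..(t + T), a s = ∫ s in (0:ℝ)..(t + T), a s :=
      intervalIntegral.integral_add_adjacent_intervals (ha.intervalIntegrable _ _)
        (ha.intervalIntegrable _ _)
    have h2 : (∫ s in t..(t + T), a s) = ∫ s in (0:ℝ)..(0 + T), a s :=
      haper.intervalIntegral_add_eq t 0
    simp only [zero_add] at h2
    simp only [hA_def]
    rw [← h1, h2]
  set g : ℝ → ℝ := fun t => Real.exp (2 * A t) with hg_def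
  have hgpos : ∀ t, 0 < g t := fun t => Real.exp_pos _
  have hgd : ∀ t, HasDerivAt g (2 * a t * g t) t := by
    intro t
    have := ((hAd t).const_mul 2).exp
    simpa [hg_def, mul_comm] using this
  have hAc : Continuous A := by
    have h : Differentiable ℝ A := fun t => (hAd t).differentiableAt
    exact h.continuous
  have hgc : Continuous g := Real.continuous_exp.comp (continuous_const.mul hAc)
  set E : ℝ := Real.exp (2 * A T) with hE_def
  have hAT : 0 < A T := by
    have hle : (∫ s in (0:ℝ)..T, (δ : ℝ)) ≤ ∫ s in (0:ℝ)..T, a s := by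
      apply intervalIntegral.integral_mono_on hT.le intervalIntegrable_const
        (ha.intervalIntegrable _ _)
      intro s _
      have := hρnn s
      simp only [ha_def]; linarith
    have hconst : (∫ s in (0:ℝ)..T, (δ : ℝ)) = T * δ := by simp [mul_comm]
    have : 0 < T * δ := mul_pos hT hδ
    simp only [hA_def]
    linarith [hle, hconst ▸ hle]
  have hE1 : 1 < E := by
    rw [hE_def]
    exact Real.one_lt_exp_iff.2 (by linarith)
  have hEpos : 0 < E := lt_trans one_pos hE1
  have hgper : ∀ t, g (t + T) = E * g t := by
    intro t
    simp only [hg_def, hE_def, hAadd, mul_add, Real.exp_add, mul_comm]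
  set G : ℝ → ℝ := fun t => ∫ s in (0:ℝ)..t, g s with hG_def
  have hGd : ∀ t, HasDerivAt G (g t) t := fun t => (hgc.integral_hasStrictDerivAt 0 t).hasDerivAt
  have hGT : 0 < G T :=
    intervalIntegral.intervalIntegral_pos_of_pos_on (hgc.intervalIntegrable _ _)
      (fun s _ => hgpos s) hT
  set C : ℝ := 2 * G T / (E - 1) with hC_def
  have hC : 0 < C := div_pos (by linarith) (by linarith)
  have hCE : C + 2 * G T = E * C := by
    have h1 : C * (E - 1) = 2 * G T := by
      rw [hC_def]
      exact div_mul_cancel₀ _ (by linarith)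
    nlinarith [h1]
  have hGper : ∀ t, G (t + T) = G T + E * G t := by
    intro t
    have h1 : (∫ s in (0:ℝ)..T, g s) + ∫ s in T..(t + T), g s = ∫ s in (0:ℝ)..(t + T), g s :=
      intervalIntegral.integral_add_adjacent_intervals (hgc.intervalIntegrable _ _)
        (hgc.intervalIntegrable _ _)
    have h2 : (∫ s in (0:ℝ)..t, g (s + T)) = ∫ s in (0:ℝ)+T..t + T, g s :=
      intervalIntegral.integral_comp_add_right g T
    have h3 : (∫ s in (0:ℝ)..t, g (s + T)) = ∫ s in (0:ℝ)..t, E * g s := by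
      congr 1; ext s; exact hgper s
    have h4 : (∫ s in (0:ℝ)..t, E * g s) = E * G t := by
      rw [intervalIntegral.integral_const_mul]
    simp only [zero_add] at h2
    simp only [hG_def]
    rw [← h1, ← h2, h3, h4]
  set v : ℝ → ℝ := fun t => C + 2 * G t with hv_def
  have hvd : ∀ t, HasDerivAt v (2 * g t) t := fun t => ((hGd t).const_mul 2).const_add C
  have hvc : Continuous v := by
    have h : Differentiable ℝ v := fun t => (hvd t).differentiableAt
    exact h.continuous
  have hvper : ∀ t, v (t + T) = E * v t := by
    intro t
    simp only [hv_def, hGper]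
    nlinarith [hCE]
  have hvpos : ∀ t, 0 < v t := by
    have key : ∀ n : ℕ, ∀ t, 0 ≤ t + n * T → 0 < v t := by
      intro n
      induction n with
      | zero =>
        intro t ht
        simp only [Nat.cast_zero, zero_mul, add_zero] at ht
        have hG0 : 0 ≤ G t := intervalIntegral.integral_nonneg ht (fun s _ => (hgpos s).le)
        simp only [hv_def]; linarith
      | succ n ih =>
        intro t ht
        have h2 : 0 < v (t + T) := by
          apply ih
          push_cast at ht ⊢
          linarith
        have := hvper t
        nlinarith
    intro t
    obtain ⟨n, hn⟩ := exists_nat_ge (-t / T)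
    apply key n
    have : -t / T * T ≤ n * T := mul_le_mul_of_nonneg_right hn hT.le
    rw [div_mul_cancel₀ _ hT.ne'] at this
    linarith
  set β : ℝ → ℝ := fun t => g t / v t with hβ_def
  have hβpos : ∀ t, 0 < β t := fun t => div_pos (hgpos t) (hvpos t)
  have hβd : ∀ t, HasDerivAt β (2 * β t * (a t - β t)) t := by
    intro t
    have h := (hgd t).div (hvd t) (hvpos t).ne'
    refine h.congr_deriv ?_
    simp only [hβ_def]
    field_simp [(hvpos t).ne']
  have hβper : ∀ t, β (t + T) = β t := by
    intro t
    simp only [hβ_def, hgper, hvper]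
    rw [mul_div_mul_left _ _ hEpos.ne']
  have hβder : ∀ t, deriv β t = 2 * β t * (ρ t + δ - β t) := by
    intro t
    have := (hβd t).deriv
    rw [this]
  have hβc : Continuous β := hgc.div hvc fun t => (hvpos t).ne'
  have hβc1 : ContDiff ℝ 1 β := by
    rw [contDiff_one_iff_deriv]
    refine ⟨fun t => (hβd t).differentiableAt, ?_⟩
    have hdeq : deriv β = fun t => 2 * β t * (a t - β t) := funext fun t => (hβd t).deriv
    rw [hdeq]
    fun_prop
  refine ⟨β, ⟨hβc1, hβpos, hβper, hβder⟩, ?_⟩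
  -- uniqueness
  rintro β₁ ⟨h1, h2, h3, h4⟩
  have hβ₁d : ∀ t, HasDerivAt β₁ (2 * β₁ t * (a t - β₁ t)) t := by
    intro t
    have := (h1.differentiable one_ne_zero t).hasDerivAt
    rw [h4 t] at this
    exact this
  set w : ℝ → ℝ := fun t => ((β₁ t)⁻¹ - (β t)⁻¹) * g t with hw_def
  have hwd : ∀ t, HasDerivAt w 0 t := by
    intro t
    have hu₁ : HasDerivAt (fun s => (β₁ s)⁻¹)
        (-(2 * β₁ t * (a t - β₁ t)) / β₁ t ^ 2) t := (hβ₁d t).inv (h2 t).ne'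
    have hu : HasDerivAt (fun s => (β s)⁻¹)
        (-(2 * β t * (a t - β t)) / β t ^ 2) t := (hβd t).inv (hβpos t).ne'
    have := ((hu₁.sub hu).mul (hgd t))
    refine this.congr_deriv ?_
    simp only [Pi.sub_apply]
    field_simp [(h2 t).ne', (hβpos t).ne']
    ring
  have hwconst : ∀ t, w t = w 0 := fun t =>
    is_const_of_deriv_eq_zero (fun x => (hwd x).differentiableAt)
      (fun x => (hwd x).deriv) t 0
  have hw0 : w 0 = 0 := by
    have hT' : w (0 + T) = E * w 0 := by
      simp only [hw_def, h3, hβper, hgper]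
      ring
    rw [hwconst (0 + T)] at hT'
    have : w 0 * (E - 1) = 0 := by linarith
    rcases mul_eq_zero.1 this with h | h
    · exact h
    · linarith
  funext t
  have hwt : w t = 0 := (hwconst t).trans hw0
  have : (β₁ t)⁻¹ = (β t)⁻¹ := by
    rcases mul_eq_zero.1 hwt with h | h
    · linarith [sub_eq_zero.1 h]
    · exact absurd h (hgpos t).ne'
  exact inv_injective this

theorem stmt16 (T : ℝ) (hT : 0 < T) (ρ : ℝ → ℝ) (hρ : Continuous ρ)
    (hρper : ∀ t, ρ (t + T) = ρ t) (hρnn : ∀ t, 0 ≤ ρ t) (hρne : ∃ t, ρ t ≠ 0)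
    (δ : ℝ) (hδ : 0 < δ) :
    (∃! β : ℝ → ℝ, ContDiff ℝ 1 β ∧ (∀ t, 0 < β t) ∧ (∀ t, β (t + T) = β t) ∧
        ∀ t, deriv β t = 2 * β t * (ρ t + δ - β t)) ∧
      ∀ β : ℝ → ℝ, (ContDiff ℝ 1 β ∧ (∀ t, 0 < β t) ∧ (∀ t, β (t + T) = β t) ∧
          ∀ t, deriv β t = 2 * β t * (ρ t + δ - β t)) →
        (1 / T) * ∫ s in (0:ℝ)..T, β s = (1 / T) * (∫ s in (0:ℝ)..T, ρ s) + δ := by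
  exact ⟨stmt16_exun hT hρ hρper hρnn hδ,
    fun β ⟨h1, h2, h3, h4⟩ => stmt16_avg hT hρ β h1 h2 h3 h4⟩
end

section
/- Let V : ℝ → ℝ be continuous on [0,1] and ε > 0, and let V_ε : [0,1] → ℝ be a C² function with sup_{[0,1]}|V_ε − V| ≤ ε. Fix T > 0 and let W : [0,1] × ℝ → ℝ be continuous, T-periodic in t with (1/T)∫₀ᵀ W(x,s)ds = V(x). Define φ_ε(x,t) = exp(−∫₀ᵗ W_ε(x,s)ds + t·V_ε(x))·β(x) for a positive C² function β, where W_ε is continuous T-periodic in t with time-average V_ε and sup|W_ε − W| ≤ ε. Then for every η > 0 there exists D₀ > 0 such that for all 0 < D < D₀ and all (x,t) ∈ (0,1)×[0,T]: ∂ₜφ_ε − D∂ₓₓφ_ε + W·φ_ε ≥ (min_{[0,1]} V − 3ε − η)·φ_ε. -/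
open Real Set MeasureTheory intervalIntegral Metric

noncomputable def pd (g : ℝ × ℝ → ℝ) (p : ℝ × ℝ) : ℝ := fderiv ℝ g p (1, 0)

lemma pd_hasDerivAt {g : ℝ × ℝ → ℝ} (hg : ContDiff ℝ 1 g) (x s : ℝ) :
    HasDerivAt (fun y => g (y, s)) (pd g (x, s)) x := by
  have h1 : HasFDerivAt g (fderiv ℝ g (x, s)) (x, s) :=
    (hg.differentiable one_ne_zero (x, s)).hasFDerivAt
  have h2 : HasDerivAt (fun y : ℝ => (y, s)) ((1 : ℝ), (0 : ℝ)) x :=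
    (hasDerivAt_id x).prodMk (hasDerivAt_const x s)
  exact h1.comp_hasDerivAt x h2

lemma pd_cont {g : ℝ × ℝ → ℝ} (hg : ContDiff ℝ 1 g) : Continuous (pd g) :=
  (hg.continuous_fderiv one_ne_zero).clm_apply continuous_const

lemma param_hasDerivAt {g : ℝ × ℝ → ℝ} (hg : ContDiff ℝ 1 g) (b x₀ : ℝ) :
    HasDerivAt (fun x => ∫ s in (0:ℝ)..b, g (x, s)) (∫ s in (0:ℝ)..b, pd g (x₀, s)) x₀ := by
  obtain ⟨C, hC⟩ : ∃ C, ∀ p ∈ (closedBall x₀ 1 ×ˢ uIcc (0:ℝ) b), ‖pd g p‖ ≤ C :=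
    ((isCompact_closedBall x₀ 1).prod isCompact_uIcc).exists_bound_of_continuousOn
      (pd_cont hg).continuousOn
  have key := intervalIntegral.hasDerivAt_integral_of_dominated_loc_of_deriv_le
    (F := fun x s => g (x, s)) (F' := fun x s => pd g (x, s)) (x₀ := x₀)
    (a := (0:ℝ)) (b := b) (μ := volume) (bound := fun _ => C) (s := ball x₀ 1) (ball_mem_nhds x₀ one_pos)
    (Filter.Eventually.of_forall fun x =>
      (hg.continuous.comp (Continuous.prodMk_right x)).aestronglyMeasurable)
    ((hg.continuous.comp (Continuous.prodMk_right x₀)).intervalIntegrable _ _)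
    (((pd_cont hg).comp (Continuous.prodMk_right x₀)).aestronglyMeasurable)
    (Filter.Eventually.of_forall fun s hs x hx =>
      hC (x, s) ⟨ball_subset_closedBall hx, uIoc_subset_uIcc hs⟩)
    (intervalIntegrable_const)
    (Filter.Eventually.of_forall fun s _ x _ => pd_hasDerivAt hg x s)
  exact key.2

set_option maxHeartbeats 1000000 in
theorem stmt17 (T : ℝ) (hT : 0 < T)
    (W : ℝ → ℝ → ℝ) (hW : Continuous fun p : ℝ × ℝ => W p.1 p.2)
    (hWper : ∀ x t, W x (t + T) = W x t)
    (V : ℝ → ℝ) (hV : ∀ x, V x = (1 / T) * ∫ s in (0:ℝ)..T, W x s)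
    (ε : ℝ) (hε : 0 < ε)
    (Wε : ℝ → ℝ → ℝ) (hWε : ContDiff ℝ 2 fun p : ℝ × ℝ => Wε p.1 p.2)
    (hWεper : ∀ x t, Wε x (t + T) = Wε x t)
    (hWεclose : ∀ x ∈ Set.Icc (0:ℝ) 1, ∀ t, |Wε x t - W x t| ≤ ε)
    (Vε : ℝ → ℝ) (hVε : ∀ x, Vε x = (1 / T) * ∫ s in (0:ℝ)..T, Wε x s)
    (β : ℝ → ℝ) (hβ : ContDiff ℝ 2 β) (hβpos : ∀ x, 0 < β x)
    (φ : ℝ → ℝ → ℝ)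
    (hφ : ∀ x t, φ x t = Real.exp (-(∫ s in (0:ℝ)..t, Wε x s) + t * Vε x) * β x) :
    ∀ η > 0, ∃ D₀ > 0, ∀ D : ℝ, 0 < D → D < D₀ →
      ∀ x ∈ Set.Ioo (0:ℝ) 1, ∀ t ∈ Set.Icc (0:ℝ) T,
        deriv (fun τ => φ x τ) t - D * deriv (deriv (fun y => φ y t)) x + W x t * φ x t ≥
          (sInf (V '' Set.Icc (0:ℝ) 1) - 3 * ε - η) * φ x t := by
  intro η hη
  set f : ℝ × ℝ → ℝ := fun p => Wε p.1 p.2 with hfdef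
  have hf2 : ContDiff ℝ 2 f := hWε
  have hf1c : ContDiff ℝ 1 f := hf2.of_le (by norm_num)
  set f1 : ℝ × ℝ → ℝ := pd f with hf1def
  have hf1 : ContDiff ℝ 1 f1 := by
    have : ContDiff ℝ 1 (fderiv ℝ f) := hf2.fderiv_right (by norm_num)
    exact this.clm_apply contDiff_const
  set f2 : ℝ × ℝ → ℝ := pd f1 with hf2def
  have hf2c : Continuous f2 := pd_cont hf1
  -- bounds on compact sets
  have hK : IsCompact (Icc (-1:ℝ) 2 ×ˢ Icc (0:ℝ) T) := isCompact_Icc.prod isCompact_Icc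
  obtain ⟨M1, hM1⟩ := hK.exists_bound_of_continuousOn hf1.continuous.continuousOn
  obtain ⟨M2, hM2⟩ := hK.exists_bound_of_continuousOn hf2c.continuousOn
  have hM1nn : 0 ≤ M1 := le_trans (norm_nonneg _)
    (hM1 ((-1:ℝ), (0:ℝ)) ⟨⟨le_refl _, by norm_num⟩, ⟨le_refl _, le_of_lt hT⟩⟩)
  have hM2nn : 0 ≤ M2 := le_trans (norm_nonneg _)
    (hM2 ((-1:ℝ), (0:ℝ)) ⟨⟨le_refl _, by norm_num⟩, ⟨le_refl _, le_of_lt hT⟩⟩)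
  -- β derivatives
  have hβ1 : ContDiff ℝ 1 (deriv β) := by
    have h : ContDiff ℝ ((1:WithTop ℕ∞)+1) β := by exact_mod_cast hβ
    exact (contDiff_succ_iff_deriv.mp h).2.2
  have hβc : Continuous β := hβ.continuous
  have hβ'c : Continuous (deriv β) := hβ1.continuous
  have hβ''c : Continuous (deriv (deriv β)) := (contDiff_one_iff_deriv.mp hβ1).2
  obtain ⟨b0, hb0⟩ := isCompact_Icc.exists_bound_of_continuousOn
    (hβc.continuousOn : ContinuousOn β (Icc (0:ℝ) 1))
  obtain ⟨b1, hb1⟩ := isCompact_Icc.exists_bound_of_continuousOn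
    (hβ'c.continuousOn : ContinuousOn (deriv β) (Icc (0:ℝ) 1))
  obtain ⟨b2, hb2⟩ := isCompact_Icc.exists_bound_of_continuousOn
    (hβ''c.continuousOn : ContinuousOn (deriv (deriv β)) (Icc (0:ℝ) 1))
  have hb0nn : 0 ≤ b0 := le_trans (norm_nonneg _) (hb0 0 ⟨le_refl _, by norm_num⟩)
  have hb1nn : 0 ≤ b1 := le_trans (norm_nonneg _) (hb1 0 ⟨le_refl _, by norm_num⟩)
  have hb2nn : 0 ≤ b2 := le_trans (norm_nonneg _) (hb2 0 ⟨le_refl _, by norm_num⟩)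
  -- min of β on [0,1]
  obtain ⟨z, hz, hzmin⟩ := isCompact_Icc.exists_isMinOn (α := ℝ)
    (Set.nonempty_Icc.mpr (by norm_num : (0:ℝ) ≤ 1)) hβc.continuousOn
  set m := β z with hmdef
  have hm : 0 < m := hβpos z
  -- constants
  set K1 := 2 * T * M1 with hK1def
  set K2 := 2 * T * M2 with hK2def
  have hK1nn : 0 ≤ K1 := by positivity
  have hK2nn : 0 ≤ K2 := by positivity
  set Bnum := K1 ^ 2 * b0 + 2 * K1 * b1 + K2 * b0 + b2 with hBnumdef
  have hBnumnn : 0 ≤ Bnum := by positivity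
  set B := Bnum / m with hBdef
  have hBnn : 0 ≤ B := by positivity
  refine ⟨η / (B + 1), by positivity, ?_⟩
  intro D hD hDlt x hx t ht
  have hxI : x ∈ Icc (0:ℝ) 1 := ⟨le_of_lt hx.1, le_of_lt hx.2⟩
  have hx12 : x ∈ Icc (-1:ℝ) 2 := ⟨by linarith [hx.1], by linarith [hx.2]⟩
  have ht0 : 0 ≤ t := ht.1
  have htT : t ≤ T := ht.2
  have hφpos : ∀ y τ, 0 < φ y τ := fun y τ => by
    rw [hφ]; exact mul_pos (Real.exp_pos _) (hβpos y)
  -- continuity of slices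
  have hWεx : ∀ y, Continuous fun s => Wε y s := fun y =>
    hf2.continuous.comp (Continuous.prodMk_right y)
  have hWx : ∀ y, Continuous fun s => W y s := fun y =>
    hW.comp (Continuous.prodMk_right y)
  ---- Step A : time derivative
  have hA : HasDerivAt (fun τ => ∫ s in (0:ℝ)..τ, Wε x s) (Wε x t) t :=
    ((hWεx x).integral_hasStrictDerivAt 0 t).hasDerivAt
  have hdt : deriv (fun τ => φ x τ) t = (Vε x - Wε x t) * φ x t := by
    have hfun : (fun τ => φ x τ)
        = fun τ => Real.exp (-(∫ s in (0:ℝ)..τ, Wε x s) + τ * Vε x) * β x :=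
      funext fun τ => hφ x τ
    have hin : HasDerivAt (fun τ => -(∫ s in (0:ℝ)..τ, Wε x s) + τ * Vε x)
        (-(Wε x t) + 1 * Vε x) t := hA.neg.add ((hasDerivAt_id t).mul_const _)
    have h := (hin.exp).mul_const (β x)
    rw [hfun, h.deriv, hφ]
    ring
  ---- Step B : spatial derivatives
  set G : ℝ → ℝ := fun y => -(∫ s in (0:ℝ)..t, Wε y s) + t * Vε y with hGdef
  set G1 : ℝ → ℝ := fun y =>
    -(∫ s in (0:ℝ)..t, f1 (y, s)) + t * ((1/T) * ∫ s in (0:ℝ)..T, f1 (y, s)) with hG1def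
  set G2 : ℝ → ℝ := fun y =>
    -(∫ s in (0:ℝ)..t, f2 (y, s)) + t * ((1/T) * ∫ s in (0:ℝ)..T, f2 (y, s)) with hG2def
  have hG : ∀ y, HasDerivAt G (G1 y) y := by
    intro y
    have h1 := param_hasDerivAt hf1c t y
    have h2 := param_hasDerivAt hf1c T y
    have : HasDerivAt (fun y => -(∫ s in (0:ℝ)..t, Wε y s)
        + t * ((1/T) * ∫ s in (0:ℝ)..T, Wε y s)) (G1 y) y :=
      h1.neg.add ((h2.const_mul (1/T)).const_mul t)
    refine this.congr_of_eventuallyEq (Filter.Eventually.of_forall fun y => ?_)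
    simp only [hGdef, hVε]
  have hG1 : ∀ y, HasDerivAt G1 (G2 y) y := by
    intro y
    have h1 := param_hasDerivAt hf1 t y
    have h2 := param_hasDerivAt hf1 T y
    exact h1.neg.add ((h2.const_mul (1/T)).const_mul t)
  have hβd : ∀ y, HasDerivAt β (deriv β y) y := fun y =>
    (hβ.differentiable (by norm_num) y).hasDerivAt
  have hβdd : ∀ y, HasDerivAt (deriv β) (deriv (deriv β) y) y := fun y =>
    (hβ1.differentiable one_ne_zero y).hasDerivAt
  have hφrow : (fun y => φ y t) = fun y => Real.exp (G y) * β y :=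
    funext fun y => hφ y t
  set P1 : ℝ → ℝ := fun y => Real.exp (G y) * (G1 y * β y + deriv β y) with hP1def
  have hP1 : ∀ y, HasDerivAt (fun y => Real.exp (G y) * β y) (P1 y) y := by
    intro y
    have h := ((hG y).exp.mul (hβd y))
    convert h using 1
    show Real.exp (G y) * (G1 y * β y + deriv β y) = _
    ring
    all_goals rfl
  set S : ℝ → ℝ := fun y => Real.exp (G y) *
    (G1 y ^ 2 * β y + 2 * G1 y * deriv β y + G2 y * β y + deriv (deriv β) y) with hSdef
  have hP1' : ∀ y, HasDerivAt P1 (S y) y := by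
    intro y
    have h := ((hG y).exp.mul (((hG1 y).mul (hβd y)).add (hβdd y)))
    convert h using 1
    show Real.exp (G y) *
      (G1 y ^ 2 * β y + 2 * G1 y * deriv β y + G2 y * β y + deriv (deriv β) y) =
      Real.exp (G y) * G1 y * (G1 y * β y + deriv β y)
        + Real.exp (G y) * (G2 y * β y + G1 y * deriv β y + deriv (deriv β) y)
    ring
    all_goals rfl
  have hderiv1 : deriv (fun y => φ y t) = P1 := by
    rw [hφrow]; funext y; exact (hP1 y).deriv
  have hderiv2 : deriv (deriv (fun y => φ y t)) x = S x := by
    rw [hderiv1]; exact (hP1' x).deriv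
  ---- bounds on G1, G2 at x
  have hIbound : ∀ (g : ℝ × ℝ → ℝ) (M : ℝ),
      (∀ p ∈ Icc (-1:ℝ) 2 ×ˢ Icc (0:ℝ) T, ‖g p‖ ≤ M) → ∀ b ∈ Icc (0:ℝ) T,
      |∫ s in (0:ℝ)..b, g (x, s)| ≤ T * M := by
    intro g M hM b hb
    have h1 : |∫ s in (0:ℝ)..b, g (x, s)| ≤ M * |b - 0| := by
      rw [← Real.norm_eq_abs]
      apply intervalIntegral.norm_integral_le_of_norm_le_const
      intro s hs
      rw [Set.uIoc_of_le hb.1] at hs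
      exact hM (x, s) ⟨hx12, ⟨le_of_lt hs.1, le_trans hs.2 hb.2⟩⟩
    calc |∫ s in (0:ℝ)..b, g (x, s)| ≤ M * |b - 0| := h1
      _ ≤ T * M := by
          rw [sub_zero, abs_of_nonneg hb.1]
          have hMnn : 0 ≤ M := le_trans (norm_nonneg _)
            (hM ((-1:ℝ), (0:ℝ)) ⟨⟨le_refl _, by norm_num⟩, ⟨le_refl _, le_of_lt hT⟩⟩)
          rw [mul_comm]
          exact mul_le_mul_of_nonneg_right hb.2 hMnn
  have habs : ∀ (g : ℝ × ℝ → ℝ) (M : ℝ),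
      (∀ p ∈ Icc (-1:ℝ) 2 ×ˢ Icc (0:ℝ) T, ‖g p‖ ≤ M) →
      |(-(∫ s in (0:ℝ)..t, g (x, s)) + t * ((1/T) * ∫ s in (0:ℝ)..T, g (x, s)))|
        ≤ 2 * T * M := by
    intro g M hM
    have h1 := hIbound g M hM t ht
    have h2 := hIbound g M hM T ⟨le_of_lt hT, le_refl T⟩
    have htTT : t * (1/T) ≤ 1 := by
      rw [mul_one_div, div_le_one hT]; exact htT
    have habs2 : |t * ((1/T) * ∫ s in (0:ℝ)..T, g (x, s))| ≤ T * M := by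
      rw [abs_mul, abs_mul]
      have : |t| * |1/T| ≤ 1 := by
        rw [abs_of_nonneg ht0, abs_of_nonneg (by positivity : (0:ℝ) ≤ 1/T)]
        exact htTT
      calc |t| * (|1/T| * |∫ s in (0:ℝ)..T, g (x, s)|)
          = (|t| * |1/T|) * |∫ s in (0:ℝ)..T, g (x, s)| := by ring
        _ ≤ 1 * (T * M) := by
            apply mul_le_mul this h2 (abs_nonneg _) (by norm_num)
        _ = T * M := one_mul _
    calc |(-(∫ s in (0:ℝ)..t, g (x, s)) + t * ((1/T) * ∫ s in (0:ℝ)..T, g (x, s)))|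
        ≤ |(-(∫ s in (0:ℝ)..t, g (x, s)))| + |t * ((1/T) * ∫ s in (0:ℝ)..T, g (x, s))| :=
          abs_add_le _ _
      _ ≤ T * M + T * M := by rw [abs_neg]; exact add_le_add h1 habs2
      _ = 2 * T * M := by ring
  have hG1b : |G1 x| ≤ K1 := habs f1 M1 hM1
  have hG2b : |G2 x| ≤ K2 := habs f2 M2 hM2
  ---- bound |S x| ≤ B * φ x t
  have hβxb0 : |β x| ≤ b0 := hb0 x hxI
  have hβxb1 : |deriv β x| ≤ b1 := hb1 x hxI
  have hβxb2 : |deriv (deriv β) x| ≤ b2 := hb2 x hxI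
  have hinner : |G1 x ^ 2 * β x + 2 * G1 x * deriv β x + G2 x * β x + deriv (deriv β) x|
      ≤ Bnum := by
    have h1 : |G1 x ^ 2 * β x| ≤ K1 ^ 2 * b0 := by
      rw [abs_mul, abs_pow]
      exact mul_le_mul (pow_le_pow_left₀ (abs_nonneg _) hG1b 2) hβxb0 (abs_nonneg _)
        (by positivity)
    have h2 : |2 * G1 x * deriv β x| ≤ 2 * K1 * b1 := by
      rw [abs_mul, abs_mul, abs_two]
      exact mul_le_mul (mul_le_mul_of_nonneg_left hG1b (by norm_num)) hβxb1
        (abs_nonneg _) (by positivity)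
    have h3 : |G2 x * β x| ≤ K2 * b0 := by
      rw [abs_mul]
      exact mul_le_mul hG2b hβxb0 (abs_nonneg _) hK2nn
    have ha1 := abs_add_le (G1 x ^ 2 * β x + 2 * G1 x * deriv β x + G2 x * β x)
      (deriv (deriv β) x)
    have ha2 := abs_add_le (G1 x ^ 2 * β x + 2 * G1 x * deriv β x) (G2 x * β x)
    have ha3 := abs_add_le (G1 x ^ 2 * β x) (2 * G1 x * deriv β x)
    rw [hBnumdef]
    linarith
  have hSb : |S x| ≤ B * φ x t := by
    rw [hSdef]
    have hφx : φ x t = Real.exp (G x) * β x := hφ x t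
    rw [abs_mul, abs_of_pos (Real.exp_pos _)]
    calc Real.exp (G x) * |G1 x ^ 2 * β x + 2 * G1 x * deriv β x + G2 x * β x
          + deriv (deriv β) x| ≤ Real.exp (G x) * Bnum :=
          mul_le_mul_of_nonneg_left hinner (le_of_lt (Real.exp_pos _))
      _ ≤ B * φ x t := by
          rw [hφx, hBdef]
          have hmle : m ≤ β x := hzmin hxI
          calc Real.exp (G x) * Bnum = (Bnum / m) * (Real.exp (G x) * m) := by
                field_simp
            _ ≤ (Bnum / m) * (Real.exp (G x) * β x) := by
                apply mul_le_mul_of_nonneg_left _ hBnn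
                exact mul_le_mul_of_nonneg_left hmle (le_of_lt (Real.exp_pos _))
  ---- lower bounds on potentials
  have hWclose : W x t - Wε x t ≥ -ε := by
    have := hWεclose x hxI t
    have := abs_le.mp this
    linarith [this.1]
  have hVεclose : Vε x ≥ V x - ε := by
    have hsub : Vε x - V x = (1/T) * ∫ s in (0:ℝ)..T, (Wε x s - W x s) := by
      rw [hVε, hV, ← mul_sub, ← intervalIntegral.integral_sub
        ((hWεx x).intervalIntegrable _ _) ((hWx x).intervalIntegrable _ _)]
    have hb : |∫ s in (0:ℝ)..T, (Wε x s - W x s)| ≤ ε * |T - 0| := by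
      rw [← Real.norm_eq_abs]
      apply intervalIntegral.norm_integral_le_of_norm_le_const
      intro s _
      rw [Real.norm_eq_abs]
      exact hWεclose x hxI s
    have : |Vε x - V x| ≤ ε := by
      rw [hsub, abs_mul, abs_of_nonneg (by positivity : (0:ℝ) ≤ 1/T)]
      calc (1/T) * |∫ s in (0:ℝ)..T, (Wε x s - W x s)| ≤ (1/T) * (ε * |T - 0|) :=
            mul_le_mul_of_nonneg_left hb (by positivity)
        _ = ε := by rw [sub_zero, abs_of_pos hT]; field_simp
    linarith [(abs_le.mp this).1]
  have hVinf : sInf (V '' Icc (0:ℝ) 1) ≤ V x := by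
    obtain ⟨MW, hMW⟩ := (isCompact_Icc.prod isCompact_Icc :
        IsCompact (Icc (0:ℝ) 1 ×ˢ Icc (0:ℝ) T)).exists_bound_of_continuousOn
      hW.continuousOn
    have hbdd : BddBelow (V '' Icc (0:ℝ) 1) := by
      refine ⟨-MW, fun v hv => ?_⟩
      obtain ⟨y, hy, rfl⟩ := hv
      have hb : |∫ s in (0:ℝ)..T, W y s| ≤ MW * |T - 0| := by
        rw [← Real.norm_eq_abs]
        apply intervalIntegral.norm_integral_le_of_norm_le_const
        intro s hs
        rw [Set.uIoc_of_le (le_of_lt hT)] at hs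
        exact hMW (y, s) ⟨hy, ⟨le_of_lt hs.1, hs.2⟩⟩
      have : |V y| ≤ MW := by
        rw [hV, abs_mul, abs_of_nonneg (by positivity : (0:ℝ) ≤ 1/T)]
        calc (1/T) * |∫ s in (0:ℝ)..T, W y s| ≤ (1/T) * (MW * |T - 0|) :=
              mul_le_mul_of_nonneg_left hb (by positivity)
          _ = MW := by rw [sub_zero, abs_of_pos hT]; field_simp
      linarith [(abs_le.mp this).1]
    exact csInf_le hbdd ⟨x, hxI, rfl⟩
  ---- conclusion
  rw [hdt, hderiv2]
  have hφp := hφpos x t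
  have hDB : D * B ≤ η := by
    have h0 : D * B ≤ D * (B + 1) :=
      mul_le_mul_of_nonneg_left (by linarith) (le_of_lt hD)
    have h1 : D * (B + 1) ≤ (η / (B + 1)) * (B + 1) :=
      mul_le_mul_of_nonneg_right (le_of_lt hDlt) (by positivity)
    have h2 : (η / (B + 1)) * (B + 1) = η := by field_simp
    linarith
  have hDS : D * S x ≤ η * φ x t := by
    calc D * S x ≤ D * |S x| := mul_le_mul_of_nonneg_left (le_abs_self _) (le_of_lt hD)
      _ ≤ D * (B * φ x t) := mul_le_mul_of_nonneg_left hSb (le_of_lt hD)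
      _ = (D * B) * φ x t := by ring
      _ ≤ η * φ x t := mul_le_mul_of_nonneg_right hDB (le_of_lt hφp)
  have hcoef : Vε x - Wε x t + W x t ≥ sInf (V '' Icc (0:ℝ) 1) - 2 * ε := by
    linarith
  have key : (Vε x - Wε x t + W x t) * φ x t ≥
      (sInf (V '' Icc (0:ℝ) 1) - 2 * ε) * φ x t :=
    mul_le_mul_of_nonneg_right hcoef (le_of_lt hφp)
  have hsplit : (Vε x - Wε x t + W x t) * φ x t
      = (Vε x - Wε x t) * φ x t + W x t * φ x t := by ring
  have hfin : (sInf (V '' Icc (0:ℝ) 1) - 2 * ε) * φ x t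
      - (sInf (V '' Icc (0:ℝ) 1) - 3 * ε - η) * φ x t = (ε + η) * φ x t := by ring
  have hpos2 : 0 ≤ (ε + η) * φ x t := by positivity
  have hlink : η * φ x t ≤ (ε + η) * φ x t :=
    mul_le_mul_of_nonneg_right (by linarith) (le_of_lt hφp)
  linarith
end

section
/- Let T > 0 and V : ℝ → ℝ continuous T-periodic, and let M₂ > 0, δ ∈ (0,1). Define f(t) = exp(−∫₀ᵗ V(s)ds + V̂·t) with V̂ = (1/T)∫₀ᵀ V, and set φ̄(x,t) = f(t)·exp(M₂(1−x)²/(2δ)) on [1−δ,1]×[0,T]. Suppose m satisfies −∂ₓm(x,t)·∂ₓφ̄(x,t) ≥ 0 on this region (e.g. ∂ₓm ≥ 0 there, since ∂ₓφ̄ ≤ 0). Then for every η > 0 there exists D₀ > 0 such that for 0 < D < D₀: ∂ₜφ̄ − D∂ₓₓφ̄ − ∂ₓm·∂ₓφ̄ + W(x,t)φ̄ ≥ (V̂ − η − ω)·φ̄ on [1−δ,1]×[0,T], where W is continuous T-periodic with W(1,t) = V(t) and ω = sup_{[1−δ,1]×[0,T]}|W(x,t) − V(t)|. -/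
theorem stmt18 (T : ℝ) (hT : 0 < T)
    (V : ℝ → ℝ) (hV : Continuous V) (hVper : ∀ t, V (t + T) = V t)
    (Vhat : ℝ) (hVhat : Vhat = (1 / T) * ∫ s in (0:ℝ)..T, V s)
    (M₂ δ : ℝ) (hM₂ : 0 < M₂) (hδ : 0 < δ) (hδ1 : δ < 1)
    (f : ℝ → ℝ) (hf : ∀ t, f t = Real.exp (-(∫ s in (0:ℝ)..t, V s) + Vhat * t))
    (φ : ℝ → ℝ → ℝ)
    (hφ : ∀ x t, φ x t = f t * Real.exp (M₂ * (1 - x) ^ 2 / (2 * δ)))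
    (W : ℝ → ℝ → ℝ) (hW : Continuous fun p : ℝ × ℝ => W p.1 p.2)
    (hWper : ∀ x t, W x (t + T) = W x t) (hW1 : ∀ t, W 1 t = V t)
    (ω : ℝ)
    (hω : ω = sSup ((fun p : ℝ × ℝ => |W p.1 p.2 - V p.2|) ''
      (Set.Icc (1 - δ) 1 ×ˢ Set.Icc 0 T)))
    (m : ℝ → ℝ → ℝ) (hm : ContDiff ℝ 2 fun p : ℝ × ℝ => m p.1 p.2)
    (hmx : ∀ x ∈ Set.Icc (1 - δ) 1, ∀ t ∈ Set.Icc (0:ℝ) T, 0 ≤ deriv (fun y => m y t) x) :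
    ∀ η > 0, ∃ D₀ > 0, ∀ D : ℝ, 0 < D → D < D₀ →
      ∀ x ∈ Set.Icc (1 - δ) 1, ∀ t ∈ Set.Icc (0:ℝ) T,
        deriv (fun τ => φ x τ) t - D * deriv (deriv (fun y => φ y t)) x
          - deriv (fun y => m y t) x * deriv (fun y => φ y t) x + W x t * φ x t ≥
          (Vhat - η - ω) * φ x t := by

  intro η hη
  have hδ' : (0:ℝ) < 2 * δ := by linarith
  set K : ℝ := M₂ / δ + M₂ ^ 2 with hKdef
  have hK0 : 0 < K := by positivity
  refine ⟨η / K, by positivity, ?_⟩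
  intro D hD0 hDK x hx t ht
  obtain ⟨hx1, hx2⟩ := hx
  obtain ⟨ht1, ht2⟩ := ht
  set g : ℝ → ℝ := fun y => Real.exp (M₂ * (1 - y) ^ 2 / (2 * δ)) with hgdef
  have hgpos : ∀ y, 0 < g y := fun y => Real.exp_pos _
  have hfpos : 0 < f t := by rw [hf]; exact Real.exp_pos _
  -- derivative of inner exponent in space
  have hb : ∀ y : ℝ, HasDerivAt (fun z : ℝ => 1 - z) (-1) y := by
    intro y; simpa using (hasDerivAt_id y).const_sub 1
  have hinner : ∀ y : ℝ, HasDerivAt (fun z => M₂ * (1 - z) ^ 2 / (2 * δ))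
      (-(M₂ * (1 - y) / δ)) y := by
    intro y
    have h1 : HasDerivAt (fun z : ℝ => (1 - z) ^ 2) ((2 : ℕ) * (1 - y) ^ 1 * (-1)) y :=
      (hb y).pow 2
    have h2 := (h1.const_mul M₂).div_const (2 * δ)
    refine h2.congr_deriv ?_
    push_cast
    ring
  have hg' : ∀ y : ℝ, HasDerivAt g (-(M₂ * (1 - y) / δ) * g y) y := by
    intro y
    simpa [hgdef, mul_comm] using (hinner y).exp
  -- derivative of A y = -(M₂ * (1 - y) / δ)
  have hA : ∀ y : ℝ, HasDerivAt (fun z : ℝ => -(M₂ * (1 - z) / δ)) (M₂ / δ) y := by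
    intro y
    have h1 := (((hb y).const_mul M₂).div_const δ).neg
    refine h1.congr_deriv ?_
    ring
  -- time derivative
  have hfun : f = fun τ => Real.exp (-(∫ s in (0:ℝ)..τ, V s) + Vhat * τ) := funext hf
  have hint : HasDerivAt (fun τ => ∫ s in (0:ℝ)..τ, V s) (V t) t :=
    intervalIntegral.integral_hasDerivAt_right (hV.intervalIntegrable 0 t)
      (hV.stronglyMeasurableAtFilter _ _) hV.continuousAt
  have hlin : HasDerivAt (fun τ : ℝ => Vhat * τ) Vhat t := by
    simpa using (hasDerivAt_id t).const_mul Vhat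
  have hf' : HasDerivAt f ((Vhat - V t) * f t) t := by
    have h2 : HasDerivAt (fun τ => -(∫ s in (0:ℝ)..τ, V s) + Vhat * τ) (-(V t) + Vhat) t :=
      hint.neg.add hlin
    have h3 := h2.exp
    rw [hfun]
    convert h3 using 1
    simp only []
    ring
  have hdt : deriv (fun τ => φ x τ) t = (Vhat - V t) * f t * g x := by
    have : (fun τ => φ x τ) = fun τ => f τ * g x := by
      funext τ; rw [hφ]
    rw [this]
    exact (hf'.mul_const (g x)).deriv
  -- first space derivative (as a function)
  have hdx_fun : deriv (fun y => φ y t) = fun y => f t * (-(M₂ * (1 - y) / δ) * g y) := by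
    funext y
    have : (fun y => φ y t) = fun y => f t * g y := by
      funext y; rw [hφ]
    rw [this]
    exact ((hg' y).const_mul (f t)).deriv
  -- second space derivative
  have hdxx : deriv (deriv (fun y => φ y t)) x
      = f t * (M₂ / δ * g x + -(M₂ * (1 - x) / δ) * (-(M₂ * (1 - x) / δ) * g x)) := by
    rw [hdx_fun]
    have hprod : HasDerivAt (fun y => -(M₂ * (1 - y) / δ) * g y)
        (M₂ / δ * g x + -(M₂ * (1 - x) / δ) * (-(M₂ * (1 - x) / δ) * g x)) x :=
      (hA x).mul (hg' x)
    exact ((hprod.const_mul (f t)).deriv)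
  -- bound from ω
  have hmem : ((x, t) : ℝ × ℝ) ∈ Set.Icc (1 - δ) 1 ×ˢ Set.Icc (0:ℝ) T :=
    ⟨⟨hx1, hx2⟩, ⟨ht1, ht2⟩⟩
  have hcomp : IsCompact (Set.Icc (1 - δ) 1 ×ˢ Set.Icc (0:ℝ) T) :=
    isCompact_Icc.prod isCompact_Icc
  have hcont : Continuous fun p : ℝ × ℝ => |W p.1 p.2 - V p.2| :=
    (hW.sub (hV.comp continuous_snd)).abs
  have hbdd : BddAbove ((fun p : ℝ × ℝ => |W p.1 p.2 - V p.2|) ''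
      (Set.Icc (1 - δ) 1 ×ˢ Set.Icc 0 T)) := (hcomp.image hcont).bddAbove
  have hωb : |W x t - V t| ≤ ω := by
    rw [hω]
    exact le_csSup hbdd ⟨(x, t), hmem, rfl⟩
  have hWV : -ω ≤ W x t - V t := by
    have := abs_le.1 hωb
    linarith [this.1]
  -- m term nonnegative
  have hmx0 : 0 ≤ deriv (fun y => m y t) x := hmx x ⟨hx1, hx2⟩ t ⟨ht1, ht2⟩
  have h1x : 0 ≤ 1 - x := by linarith
  have h1xδ : 1 - x ≤ δ := by linarith
  -- D bound
  have hA2 : (M₂ * (1 - x) / δ) ^ 2 ≤ M₂ ^ 2 := by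
    have h1 : M₂ * (1 - x) / δ ≤ M₂ := by
      rw [div_le_iff₀ hδ]
      nlinarith
    have h2 : 0 ≤ M₂ * (1 - x) / δ := by positivity
    nlinarith
  have hDbound : D * (M₂ / δ + (M₂ * (1 - x) / δ) ^ 2) ≤ η := by
    have h1 : M₂ / δ + (M₂ * (1 - x) / δ) ^ 2 ≤ K := by rw [hKdef]; linarith
    have h2 : D * (M₂ / δ + (M₂ * (1 - x) / δ) ^ 2) ≤ D * K :=
      mul_le_mul_of_nonneg_left h1 hD0.le
    have h3 : D * K < (η / K) * K := by
      exact mul_lt_mul_of_pos_right hDK hK0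
    have h4 : (η / K) * K = η := by field_simp
    linarith
  -- key scalar inequality
  have key : -η - ω ≤ (W x t - V t) - D * (M₂ / δ + (M₂ * (1 - x) / δ) ^ 2)
      + deriv (fun y => m y t) x * (M₂ * (1 - x) / δ) := by
    have hm0 : 0 ≤ deriv (fun y => m y t) x * (M₂ * (1 - x) / δ) := by positivity
    linarith
  -- assemble
  have hP : 0 < f t * g x := mul_pos hfpos (hgpos x)
  have hφx : φ x t = f t * g x := by rw [hφ]
  rw [hdt, hdxx, hdx_fun, hφx]
  simp only
  linarith [mul_nonneg (sub_nonneg.2 key) hP.le]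
end

section
/- Let g : ℝ × ℝ → ℝ be continuous, Lipschitz in the first variable, with g(x, t+T) = g(x, t). Suppose a < b are real numbers with g(a, t) ≥ 0 and g(b, t) ≤ 0 for all t. Then there exists a T-periodic C¹ (indeed Lipschitz) solution p : ℝ → [a, b] of p'(t) = g(p(t), t). -/
open Set Real Filter Topology


-- truncated field facts
lemma clamp_mem {a b : ℝ} (hab : a ≤ b) (x : ℝ) : max a (min x b) ∈ Icc a b :=
  ⟨le_max_left _ _, max_le (by linarith [min_le_right x b]) (min_le_right x b)⟩

lemma exists_sol (T : ℝ) (hT : 0 < T) (g : ℝ → ℝ → ℝ)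
    (hg : Continuous fun p : ℝ × ℝ => g p.1 p.2)
    (K : NNReal) (hlip : ∀ t, LipschitzWith K fun x => g x t)
    (a b : ℝ) (hab : a ≤ b) (x₀ : ℝ) :
    ∃ f : ℝ → ℝ, f 0 = x₀ ∧ ∀ t ∈ Icc 0 T,
      HasDerivWithinAt f (g (max a (min (f t) b)) t) (Icc 0 T) t := by
  set v : ℝ → ℝ → ℝ := fun t x => g (max a (min x b)) t with hv
  -- bound on compact set
  obtain ⟨C, hC⟩ : ∃ C, ∀ p ∈ Icc a b ×ˢ Icc 0 T, |g p.1 p.2| ≤ C := by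
    rcases (isCompact_Icc.prod isCompact_Icc).exists_bound_of_continuousOn
      (hg.continuousOn (s := Icc a b ×ˢ Icc 0 T)) with ⟨C, hC⟩
    exact ⟨C, fun p hp => by simpa using hC p hp⟩
  have hC0 : 0 ≤ C := le_trans (abs_nonneg _) (hC (a, 0) ⟨⟨le_refl a, hab⟩, ⟨le_refl 0, hT.le⟩⟩)
  have hpl : IsPicardLindelof v (tmin := 0) (tmax := T) ⟨0, ⟨le_refl 0, hT.le⟩⟩ x₀
      (⟨C, hC0⟩ * T.toNNReal) 0 ⟨C, hC0⟩ K := by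
    constructor
    · intro t _
      have : LipschitzWith (K * 1) (fun x => v t x) :=
        (hlip t).comp ((LipschitzWith.id.min_const b).const_max a)
      simpa using this.lipschitzOnWith
    · intro x _
      exact ((hg.comp (continuous_const.prodMk continuous_id)).continuousOn)
    · intro t ht x _
      have := hC (max a (min x b), t) ⟨clamp_mem hab x, ht⟩
      show ‖v t x‖ ≤ C
      simpa [hv] using this
    · have : max (T - 0) (0 - 0) = T := by
        rw [sub_zero, sub_zero]; exact max_eq_left hT.le
      simp only [this, NNReal.coe_mul, NNReal.coe_mk, Real.coe_toNNReal _ hT.le,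
        NNReal.coe_zero, sub_zero, le_refl]
      show C * max T 0 ≤ C * ((T.toNNReal : ℝ))
      rw [max_eq_left hT.le, Real.coe_toNNReal _ hT.le]
  obtain ⟨f, hf0, hf⟩ := hpl.exists_eq_forall_mem_Icc_hasDerivWithinAt₀
  exact ⟨f, hf0, hf⟩

lemma stay_le (T : ℝ) (_hT : 0 < T) (f F : ℝ → ℝ) (b : ℝ)
    (hf : ∀ t ∈ Icc 0 T, HasDerivWithinAt f (F t) (Icc 0 T) t)
    (hF : ∀ t ∈ Icc 0 T, b ≤ f t → F t ≤ 0)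
    (h0 : f 0 ≤ b) : ∀ t ∈ Icc 0 T, f t ≤ b := by
  intro t₁ ht₁
  by_contra hlt
  push_neg at hlt
  have hcont : ContinuousOn f (Icc 0 T) := fun u hu => (hf u hu).continuousWithinAt
  set S : Set ℝ := Icc 0 t₁ ∩ f ⁻¹' (Iic b) with hS
  have hsub : Icc 0 t₁ ⊆ Icc 0 T := Icc_subset_Icc le_rfl ht₁.2
  have hSclosed : IsClosed S :=
    (hcont.mono hsub).preimage_isClosed_of_isClosed isClosed_Icc isClosed_Iic
  have hScomp : IsCompact S := isCompact_Icc.of_isClosed_subset hSclosed inter_subset_left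
  have hSne : S.Nonempty := ⟨0, ⟨le_rfl, ht₁.1⟩, h0⟩
  set s := sSup S with hs
  have hsmem : s ∈ S := hScomp.sSup_mem hSne
  have hsle : f s ≤ b := hsmem.2
  have hs1 : s ∈ Icc 0 t₁ := hsmem.1
  have hslt : s < t₁ := lt_of_le_of_ne hs1.2 (fun h => by rw [h] at hsle; linarith)
  have hgt : ∀ τ ∈ Ioc s t₁, b < f τ := by
    intro τ hτ
    by_contra hle
    push_neg at hle
    have : τ ∈ S := ⟨⟨hs1.1.trans hτ.1.le, hτ.2⟩, hle⟩
    exact absurd (le_csSup hScomp.bddAbove this) (not_le.2 hτ.1)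
  have hderiv : ∀ τ ∈ Ioo s t₁, HasDerivAt f (F τ) τ := by
    intro τ hτ
    have hτm : τ ∈ Icc 0 T := ⟨hs1.1.trans hτ.1.le, hτ.2.le.trans ht₁.2⟩
    exact (hf τ hτm).hasDerivAt (Icc_mem_nhds (lt_of_le_of_lt hs1.1 hτ.1)
      (lt_of_lt_of_le hτ.2 ht₁.2))
  have hanti : AntitoneOn f (Icc s t₁) := by
    apply antitoneOn_of_deriv_nonpos (convex_Icc s t₁)
      (hcont.mono (Icc_subset_Icc hs1.1 ht₁.2))
    · intro τ hτ
      rw [interior_Icc] at hτ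
      exact (hderiv τ hτ).differentiableAt.differentiableWithinAt
    · intro τ hτ
      rw [interior_Icc] at hτ
      rw [(hderiv τ hτ).deriv]
      exact hF τ ⟨hs1.1.trans hτ.1.le, hτ.2.le.trans ht₁.2⟩ (hgt τ ⟨hτ.1, hτ.2.le⟩).le
  have := hanti ⟨le_rfl, hslt.le⟩ ⟨hslt.le, le_rfl⟩ hslt.le
  linarith

theorem stmt19 (T : ℝ) (hT : 0 < T) (g : ℝ → ℝ → ℝ)
    (hg : Continuous fun p : ℝ × ℝ => g p.1 p.2)
    (K : NNReal) (hlip : ∀ t, LipschitzWith K fun x => g x t)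
    (hper : ∀ x t, g x (t + T) = g x t)
    (a b : ℝ) (hab : a < b)
    (hga : ∀ t, 0 ≤ g a t) (hgb : ∀ t, g b t ≤ 0) :
    ∃ p : ℝ → ℝ, (∀ t, p t ∈ Set.Icc a b) ∧ ContDiff ℝ 1 p ∧
      (∀ t, p (t + T) = p t) ∧ ∀ t, HasDerivAt p (g (p t) t) t := by
  have hex := exists_sol T hT g hg K hlip a b hab.le
  choose sol hsol0 hsolD using hex
  have hcl_ge : ∀ x : ℝ, b ≤ x → max a (min x b) = b := fun x hx => by
    rw [min_eq_right hx, max_eq_right hab.le]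
  have hcl_le : ∀ x : ℝ, x ≤ a → max a (min x b) = a := fun x hx => by
    rw [min_eq_left (hx.trans hab.le), max_eq_left hx]
  have hcl_mem : ∀ x ∈ Icc a b, max a (min x b) = x := fun x hx => by
    rw [min_eq_left hx.2, max_eq_right hx.1]
  -- invariance of [a, b]
  have hinv : ∀ x₀ ∈ Icc a b, ∀ t ∈ Icc 0 T, sol x₀ t ∈ Icc a b := by
    intro x₀ hx₀ t ht
    have hub := stay_le T hT (sol x₀) (fun t => g (max a (min (sol x₀ t) b)) t) b (hsolD x₀)
      (fun t _ hb => by rw [hcl_ge _ hb]; exact hgb t)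
      (by rw [hsol0]; exact hx₀.2) t ht
    have hlb := stay_le T hT (fun t => -sol x₀ t) (fun t => -g (max a (min (sol x₀ t) b)) t) (-a)
      (fun t ht => (hsolD x₀ t ht).neg)
      (fun t _ hb => by
        have hb' : -a ≤ -sol x₀ t := hb
        rw [hcl_le _ (by linarith)]
        linarith [hga t])
      (by show -sol x₀ 0 ≤ -a; rw [hsol0]; linarith [hx₀.1]) t ht
    have hlb' : -sol x₀ t ≤ -a := hlb
    exact ⟨by linarith, hub⟩
  -- Lipschitz continuity of the time-T map (Grönwall)
  have hvlip : ∀ t, LipschitzWith K (fun x => g (max a (min x b)) t) := by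
    intro t
    have : LipschitzWith (K * 1) (fun x => g (max a (min x b)) t) :=
      (hlip t).comp ((LipschitzWith.id.min_const b).const_max a)
    simpa using this
  have hIciD : ∀ x₀, ∀ t ∈ Ico 0 T,
      HasDerivWithinAt (sol x₀) (g (max a (min (sol x₀ t) b)) t) (Ici t) t := by
    intro x₀ t ht
    refine (hsolD x₀ t ⟨ht.1, ht.2.le⟩).mono_of_mem_nhdsWithin ?_
    exact Filter.mem_of_superset (inter_mem_nhdsWithin (Ici t) (Iic_mem_nhds ht.2))
      (fun u hu => ⟨ht.1.trans hu.1, hu.2⟩)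
  have hcontOn : ∀ x₀, ContinuousOn (sol x₀) (Icc 0 T) :=
    fun x₀ u hu => (hsolD x₀ u hu).continuousWithinAt
  have hgron : ∀ x y, dist (sol x T) (sol y T) ≤ dist x y * exp (K * (T - 0)) := by
    intro x y
    exact dist_le_of_trajectories_ODE (v := fun t x => g (max a (min x b)) t) hvlip
      (hcontOn x) (hIciD x) (hcontOn y) (hIciD y) (by rw [hsol0, hsol0]) T ⟨hT.le, le_rfl⟩
  have hPlip : LipschitzWith (Real.toNNReal (exp (K * (T - 0)))) (fun x => sol x T) := by
    apply LipschitzWith.of_dist_le_mul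
    intro x y
    rw [Real.coe_toNNReal _ (exp_pos _).le, mul_comm]
    exact hgron x y
  -- fixed point of the Poincaré map via IVT
  have hq : ContinuousOn (fun x => sol x T - x) (Icc a b) :=
    (hPlip.continuous.continuousOn).sub continuousOn_id
  have hqa : 0 ≤ sol a T - a := by
    have := (hinv a ⟨le_rfl, hab.le⟩ T ⟨hT.le, le_rfl⟩).1; linarith
  have hqb : sol b T - b ≤ 0 := by
    have := (hinv b ⟨hab.le, le_rfl⟩ T ⟨hT.le, le_rfl⟩).2; linarith
  obtain ⟨c, hcmem, hcfix⟩ : ∃ c ∈ Icc a b, sol c T - c = 0 :=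
    intermediate_value_Icc' hab.le hq ⟨hqb, hqa⟩
  have hfT : sol c T = c := by linarith
  set f : ℝ → ℝ := sol c with hfdef
  have hf0 : f 0 = c := hsol0 c
  have hfmem : ∀ t ∈ Icc 0 T, f t ∈ Icc a b := hinv c hcmem
  have hfD : ∀ t ∈ Icc 0 T, HasDerivWithinAt f (g (f t) t) (Icc 0 T) t := by
    intro t ht
    have h := hsolD c t ht
    rwa [hcl_mem _ (hfmem t ht)] at h
  -- periodic extension
  set p : ℝ → ℝ := fun t => f (t - ⌊t / T⌋ * T) with hpdef
  have hfrac : ∀ t : ℝ, t - ⌊t / T⌋ * T ∈ Ico 0 T := by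
    intro t
    have h1 := Int.fract_nonneg (t / T)
    have h2 := Int.fract_lt_one (t / T)
    have he : t - ⌊t / T⌋ * T = Int.fract (t / T) * T := by
      rw [Int.fract]; field_simp
    rw [he]
    exact ⟨mul_nonneg h1 hT.le, by nlinarith⟩
  have hfloor : ∀ (m : ℤ) (t : ℝ), (m : ℝ) * T ≤ t → t < ((m : ℝ) + 1) * T →
      ⌊t / T⌋ = m := by
    intro m t h1 h2
    rw [Int.floor_eq_iff]
    constructor
    · rw [le_div_iff₀ hT]; linarith
    · rw [div_lt_iff₀ hT]; linarith
  have hkey : ∀ (m : ℤ) (t : ℝ), (m : ℝ) * T ≤ t → t ≤ ((m : ℝ) + 1) * T →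
      p t = f (t - (m : ℝ) * T) := by
    intro m t h1 h2
    rcases eq_or_lt_of_le h2 with heq | hlt
    · have hfl : ⌊t / T⌋ = m + 1 := by
        apply hfloor (m + 1) t
        · push_cast; linarith
        · push_cast ; nlinarith
      show f (t - ⌊t / T⌋ * T) = f (t - (m : ℝ) * T)
      rw [hfl]
      have e1 : t - ((m + 1 : ℤ) : ℝ) * T = 0 := by push_cast; linarith
      have e2 : t - (m : ℝ) * T = T := by linarith
      rw [e1, e2, hf0, hfT]
    · have hfl : ⌊t / T⌋ = m := hfloor m t h1 hlt
      show f (t - ⌊t / T⌋ * T) = f (t - (m : ℝ) * T)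
      rw [hfl]
  have hperp : ∀ t, p (t + T) = p t := by
    intro t
    have hfl : ⌊(t + T) / T⌋ = ⌊t / T⌋ + 1 := by
      rw [show (t + T) / T = t / T + 1 by field_simp, Int.floor_add_one]
    show f (t + T - ⌊(t + T) / T⌋ * T) = f (t - ⌊t / T⌋ * T)
    rw [hfl]
    push_cast
    ring_nf
  have gper : ∀ (x : ℝ) (m : ℤ) (s : ℝ), g x (s + m * T) = g x s := by
    intro x m s
    exact (Function.Periodic.int_mul (hper x) m) s
  -- translated solutions solve the ODE on shifted intervals
  have hshift : ∀ (m : ℤ) (s t : ℝ), s ∈ Icc 0 T → t = s + (m : ℝ) * T →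
      HasDerivWithinAt (fun u => f (u - (m : ℝ) * T)) (g (f s) s)
        (Icc ((m : ℝ) * T) (((m : ℝ) + 1) * T)) t := by
    intro m s t hs hts
    subst hts
    have h1 : HasDerivWithinAt f (g (f s) s) (Icc 0 T)
        ((fun u : ℝ => u - (m : ℝ) * T) (s + (m : ℝ) * T)) := by
      simpa using hfD s hs
    have h2 : HasDerivWithinAt (fun u : ℝ => u - (m : ℝ) * T) 1
        (Icc ((m : ℝ) * T) (((m : ℝ) + 1) * T)) (s + (m : ℝ) * T) :=
      (hasDerivWithinAt_id _ _).sub_const _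
    have maps : MapsTo (fun u : ℝ => u - (m : ℝ) * T)
        (Icc ((m : ℝ) * T) (((m : ℝ) + 1) * T)) (Icc 0 T) := by
      intro u hu
      simp only [mem_Icc] at hu ⊢
      constructor
      · linarith [hu.1]
      · nlinarith [hu.2]
    have := HasDerivWithinAt.comp (s + (m : ℝ) * T) h1 h2 maps
    rw [mul_one] at this
    exact this
  -- the derivative everywhere
  have hD : ∀ t, HasDerivAt p (g (p t) t) t := by
    intro t
    set m : ℤ := ⌊t / T⌋ with hm
    have hτ := hfrac t
    have htlb : (m : ℝ) * T ≤ t := by linarith [hτ.1]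
    have htub : t < ((m : ℝ) + 1) * T := by nlinarith [hτ.2]
    have hpt : p t = f (t - (m : ℝ) * T) := rfl
    have hval : g (p t) t = g (p t) (t - (m : ℝ) * T) := by
      have h := gper (p t) m (t - (m : ℝ) * T)
      have h2 : t - (m : ℝ) * T + (m : ℝ) * T = t := by ring
      rw [h2] at h
      exact h
    have hmemR : Icc ((m : ℝ) * T) (((m : ℝ) + 1) * T) ∈ 𝓝[Ici t] t :=
      Filter.mem_of_superset (inter_mem_nhdsWithin (Ici t) (Iio_mem_nhds htub))
        (fun u hu => ⟨htlb.trans hu.1, hu.2.le⟩)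
    have hR : HasDerivWithinAt p (g (p t) t) (Ici t) t := by
      have h1 := (hshift m (t - (m : ℝ) * T) t ⟨hτ.1, hτ.2.le⟩
        (by ring)).mono_of_mem_nhdsWithin hmemR
      rw [← hpt] at h1
      rw [← hval] at h1
      refine h1.congr_of_eventuallyEq ?_ hpt
      filter_upwards [hmemR] with u hu
      exact hkey m u hu.1 hu.2
    have hL : HasDerivWithinAt p (g (p t) t) (Iic t) t := by
      rcases eq_or_lt_of_le htlb with heq | hlt
      · -- t = m * T : glue with the previous interval
        set k : ℤ := m - 1 with hkdef
        have hk : (k : ℝ) = (m : ℝ) - 1 := by rw [hkdef]; push_cast; ring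
        have ht0 : t - (m : ℝ) * T = 0 := by linarith
        have hts : t = T + (k : ℝ) * T := by rw [hk]; nlinarith
        have hklt : (k : ℝ) * T < t := by rw [hk]; nlinarith
        have hkub : t ≤ ((k : ℝ) + 1) * T := by rw [hk]; nlinarith
        have hmemL : Icc ((k : ℝ) * T) (((k : ℝ) + 1) * T) ∈ 𝓝[Iic t] t :=
          Filter.mem_of_superset (inter_mem_nhdsWithin (Iic t) (Ioi_mem_nhds hklt))
            (fun u hu => ⟨hu.2.le, hu.1.trans hkub⟩)
        have h1 := (hshift k T t ⟨hT.le, le_rfl⟩ hts).mono_of_mem_nhdsWithin hmemL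
        have hvalL : g (f T) T = g (p t) t := by
          have h := gper (f T) k T
          rw [show T + (k : ℝ) * T = t from hts.symm] at h
          rw [← h, hpt, ht0, hf0, hfT]
        rw [hvalL] at h1
        refine h1.congr_of_eventuallyEq ?_ ?_
        · filter_upwards [hmemL] with u hu
          exact hkey k u hu.1 hu.2
        · rw [hpt, ht0, hf0, show t - (k : ℝ) * T = T by rw [hk]; nlinarith, hfT]
      · -- m * T < t
        have hmemL : Icc ((m : ℝ) * T) (((m : ℝ) + 1) * T) ∈ 𝓝[Iic t] t :=
          Filter.mem_of_superset (inter_mem_nhdsWithin (Iic t) (Ioi_mem_nhds hlt))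
            (fun u hu => ⟨hu.2.le, hu.1.trans htub.le⟩)
        have h1 := (hshift m (t - (m : ℝ) * T) t ⟨hτ.1, hτ.2.le⟩
          (by ring)).mono_of_mem_nhdsWithin hmemL
        rw [← hpt] at h1
        rw [← hval] at h1
        refine h1.congr_of_eventuallyEq ?_ hpt
        filter_upwards [hmemL] with u hu
        exact hkey m u hu.1 hu.2
    have huni := hL.union hR
    rw [Iic_union_Ici] at huni
    exact hasDerivWithinAt_univ.mp huni
  refine ⟨p, ?_, ?_, hperp, hD⟩
  · intro t
    exact hfmem _ (Ico_subset_Icc_self (hfrac t))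
  · have hdiff : Differentiable ℝ p := fun t => (hD t).differentiableAt
    rw [contDiff_one_iff_deriv]
    refine ⟨hdiff, ?_⟩
    have hderiv : deriv p = fun t => g (p t) t := funext fun t => (hD t).deriv
    rw [hderiv]
    exact hg.comp (hdiff.continuous.prodMk continuous_id)
end
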